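/- Let F be a number field with ring of integers O_F, class group Cl_F, and unit group O_F^×, and n ≥ 1. With Z₁, B₁ as above (Z₁ = {(x,I) ∈ F^× ⊕ Div(F) : nI = -div(x)}, B₁ = {(x^n, -div(x))}), there is an exact sequence 0 → O_F^×/(O_F^×)^n → Z₁/B₁ → Cl_F[n] → 0; in particular |Z₁/B₁| = |O_F^×/(O_F^×)^n| · |Cl_F[n]|. -/

import Mathlib

open NumberField
open scoped nonZeroDivisors

variable (F : Type) [Field F] [NumberField F]

/-- The group `Div F` of fractional ideals of a number field `F` (written multiplicatively). -/
abbrev DivF := (FractionalIdeal (𝓞 F)⁰ F)ˣ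

/-- `div : F^× → Div F`, sending `x` to the principal fractional ideal it generates. -/
noncomputable def divF : Fˣ →* DivF F := toPrincipalIdeal (𝓞 F) F

/-- The homomorphism `(x, I) ↦ I^n ⬝ div(x)`, whose kernel is
`Z₁ = {(x, I) : I^n = div(x)⁻¹}`. -/
noncomputable def z1Hom (n : ℕ) : Fˣ × DivF F →* DivF F :=
  ((powMonoidHom n).comp (MonoidHom.snd _ _)) * ((divF F).comp (MonoidHom.fst _ _))

/-- `Z₁ = {(x, I) ∈ F^× ⊕ Div F : I^n = div(x)⁻¹}` (multiplicative notation for `nI = -div(x)`). -/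
noncomputable def Z1 (n : ℕ) : Subgroup (Fˣ × DivF F) := (z1Hom F n).ker

/-- The homomorphism `x ↦ (x^n, div(x)⁻¹)`, whose range is `B₁`. -/
noncomputable def b1Hom (n : ℕ) : Fˣ →* Fˣ × DivF F :=
  (powMonoidHom n).prod (divF F)⁻¹

/-- `B₁ = {(x^n, div(x)⁻¹) : x ∈ F^×}`. -/
noncomputable def B1 (n : ℕ) : Subgroup (Fˣ × DivF F) := (b1Hom F n).range
open FractionalIdeal

noncomputable def UF : (𝓞 F)ˣ →* Fˣ := Units.map (algebraMap (𝓞 F) F : 𝓞 F →* F)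

lemma UF_inj : Function.Injective (UF F) :=
  Units.map_injective (IsFractionRing.injective (𝓞 F) F)

lemma toPrincipal_UF (u : (𝓞 F)ˣ) : toPrincipalIdeal (𝓞 F) F (UF F u) = 1 := by
  apply Units.ext
  rw [coe_toPrincipalIdeal]
  show spanSingleton (𝓞 F)⁰ (algebraMap (𝓞 F) F (u : 𝓞 F)) = 1
  rw [← coeIdeal_span_singleton, Ideal.span_singleton_eq_top.mpr u.isUnit, coeIdeal_top]

lemma toPrincipal_eq_one (x : Fˣ) (h : toPrincipalIdeal (𝓞 F) F x = 1) :
    ∃ u : (𝓞 F)ˣ, UF F u = x := by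
  have h1 : spanSingleton (𝓞 F)⁰ (x : F) = 1 := by
    rw [← coe_toPrincipalIdeal, h, Units.val_one]
  have hx : (x : F) ∈ (1 : FractionalIdeal (𝓞 F)⁰ F) := by
    rw [← h1]; exact mem_spanSingleton_self _ _
  obtain ⟨r, hr⟩ := (FractionalIdeal.mem_one_iff _).mp hx
  have : (Ideal.span {r} : Ideal (𝓞 F)) = ⊤ := by
    apply FractionalIdeal.coeIdeal_injective (K := F)
    show ((Ideal.span {r} : Ideal (𝓞 F)) : FractionalIdeal (𝓞 F)⁰ F)
        = ((⊤ : Ideal (𝓞 F)) : FractionalIdeal (𝓞 F)⁰ F)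
    rw [coeIdeal_span_singleton, hr, h1, coeIdeal_top]
  obtain ⟨u, hu⟩ := Ideal.span_singleton_eq_top.mp this
  exact ⟨u, Units.ext (by simpa [UF, hu] using hr)⟩

lemma mk_toPrincipal (x : Fˣ) : ClassGroup.mk F (toPrincipalIdeal (𝓞 F) F x) = 1 :=
  ClassGroup.mk_eq_one_iff.mpr ⟨⟨(x : F), by
    rw [coe_toPrincipalIdeal, coe_spanSingleton]⟩⟩

lemma mk_eq_one' {I : (FractionalIdeal (𝓞 F)⁰ F)ˣ} (h : ClassGroup.mk F I = 1) :
    ∃ x : Fˣ, toPrincipalIdeal (𝓞 F) F x = I := by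
  have hI := ClassGroup.mk_eq_one_iff.mp h
  obtain ⟨x, hx⟩ := hI.principal
  have hx' : (I : FractionalIdeal (𝓞 F)⁰ F) = spanSingleton (𝓞 F)⁰ x := by
    apply Subtype.coe_injective
    simp only [val_eq_coe, hx, coe_spanSingleton]
  refine ⟨Units.mk0 x ?_, ?_⟩
  · intro x_eq; apply Units.ne_zero I; simp [hx', x_eq]
  · exact Units.ext (by simp [coe_toPrincipalIdeal, hx'])

lemma mk_surj' (c : ClassGroup (𝓞 F)) :
    ∃ I : (FractionalIdeal (𝓞 F)⁰ F)ˣ, ClassGroup.mk F I = c :=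
  ClassGroup.induction (K := F) (fun I => ⟨I, rfl⟩) c

theorem stmt_15 (n : ℕ) (hn : 1 ≤ n) :
    B1 F n ≤ Z1 F n ∧
    ∃ (g : ((𝓞 F)ˣ ⧸ (powMonoidHom n : (𝓞 F)ˣ →* (𝓞 F)ˣ).range) →*
        (Z1 F n ⧸ (B1 F n).subgroupOf (Z1 F n)))
      (f : (Z1 F n ⧸ (B1 F n).subgroupOf (Z1 F n)) →* ClassGroup (𝓞 F)),
      Function.Injective g ∧
      (∀ z : Z1 F n, f (QuotientGroup.mk z) = ClassGroup.mk F z.val.2) ∧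
      (∀ w, (f w) ^ n = 1) ∧
      (∀ c : ClassGroup (𝓞 F), c ^ n = 1 → ∃ w, f w = c) ∧
      f.ker = g.range ∧
      Nat.card (Z1 F n ⧸ (B1 F n).subgroupOf (Z1 F n)) =
        Nat.card ((𝓞 F)ˣ ⧸ (powMonoidHom n : (𝓞 F)ˣ →* (𝓞 F)ˣ).range) *
          Nat.card {c : ClassGroup (𝓞 F) // c ^ n = 1} := by
  have hb1 : ∀ x : Fˣ, b1Hom F n x = (x ^ n, (divF F x)⁻¹) := fun x => rfl
  have hz1 : ∀ z : Fˣ × DivF F, z1Hom F n z = z.2 ^ n * divF F z.1 := fun z => rfl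
  have hBZ : B1 F n ≤ Z1 F n := by
    rintro z ⟨x, rfl⟩
    show z1Hom F n (b1Hom F n x) = 1
    rw [hz1, hb1]
    simp [map_pow, inv_pow]
  refine ⟨hBZ, ?_⟩
  -- gbar
  have hmem : ∀ u : (𝓞 F)ˣ, ((UF F).prod 1 u) ∈ Z1 F n := by
    intro u
    show z1Hom F n _ = 1
    rw [hz1]
    show (1 : DivF F) ^ n * divF F (UF F u) = 1
    rw [one_pow, one_mul]
    exact toPrincipal_UF F u
  set gbar : (𝓞 F)ˣ →* Z1 F n := ((UF F).prod 1).codRestrict _ hmem with hgbar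
  set g0 : (𝓞 F)ˣ →* (Z1 F n ⧸ (B1 F n).subgroupOf (Z1 F n)) :=
    (QuotientGroup.mk' _).comp gbar with hg0
  have hker : (powMonoidHom n : (𝓞 F)ˣ →* (𝓞 F)ˣ).range ≤ g0.ker := by
    rintro _ ⟨v, rfl⟩
    show QuotientGroup.mk (gbar (v ^ n)) = 1
    rw [QuotientGroup.eq_one_iff]
    rw [Subgroup.mem_subgroupOf]
    refine ⟨UF F v, ?_⟩
    rw [hb1]
    apply Prod.ext
    · show (UF F v) ^ n = UF F (v ^ n); rw [map_pow]
    · show (divF F (UF F v))⁻¹ = 1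
      rw [show divF F (UF F v) = 1 from toPrincipal_UF F v, inv_one]
  set g : ((𝓞 F)ˣ ⧸ (powMonoidHom n : (𝓞 F)ˣ →* (𝓞 F)ˣ).range) →*
      (Z1 F n ⧸ (B1 F n).subgroupOf (Z1 F n)) :=
    QuotientGroup.lift _ g0 hker with hg
  -- f
  set f0 : (Z1 F n : Subgroup _) →* ClassGroup (𝓞 F) :=
    (ClassGroup.mk F).comp ((MonoidHom.snd _ _).comp (Z1 F n).subtype) with hf0
  have hker2 : (B1 F n).subgroupOf (Z1 F n) ≤ f0.ker := by
    intro z hz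
    rw [Subgroup.mem_subgroupOf] at hz
    obtain ⟨x, hx⟩ := hz
    show ClassGroup.mk F (z : Fˣ × DivF F).2 = 1
    rw [← hx, hb1]
    show ClassGroup.mk F (divF F x)⁻¹ = 1
    rw [_root_.map_inv, show ClassGroup.mk F (divF F x) = 1 from mk_toPrincipal F x, inv_one]
  set f : (Z1 F n ⧸ (B1 F n).subgroupOf (Z1 F n)) →* ClassGroup (𝓞 F) :=
    QuotientGroup.lift _ f0 hker2 with hf
  have hginj : Function.Injective g := by
    rw [← MonoidHom.ker_eq_bot_iff, Subgroup.eq_bot_iff_forall]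
    intro w hw
    induction w using QuotientGroup.induction_on with
    | H u =>
      rw [MonoidHom.mem_ker] at hw
      have hw' : QuotientGroup.mk (gbar u) = (1 : Z1 F n ⧸ (B1 F n).subgroupOf (Z1 F n)) := hw
      rw [QuotientGroup.eq_one_iff, Subgroup.mem_subgroupOf] at hw'
      obtain ⟨x, hx⟩ := hw'
      rw [hb1] at hx
      have h2 : (divF F x)⁻¹ = 1 := congrArg Prod.snd hx
      have h1 : x ^ n = UF F u := congrArg Prod.fst hx
      obtain ⟨v, hv⟩ := toPrincipal_eq_one F x (by rwa [inv_eq_one] at h2)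
      have : UF F (v ^ n) = UF F u := by rw [map_pow, hv, h1]
      rw [QuotientGroup.eq_one_iff]
      exact ⟨v, UF_inj F this⟩
  have hres : ∀ z : Z1 F n, f (QuotientGroup.mk z) = ClassGroup.mk F (z : Fˣ × DivF F).2 := fun z => rfl
  have htor : ∀ w, (f w) ^ n = 1 := by
    intro w
    induction w using QuotientGroup.induction_on with
    | H z =>
      have : f (QuotientGroup.mk z) = ClassGroup.mk F (z : Fˣ × DivF F).2 := rfl
      rw [this, ← map_pow]
      have hz : (z : Fˣ × DivF F).2 ^ n * divF F (z : Fˣ × DivF F).1 = 1 := by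
        rw [← hz1]; exact z.2
      have : (z : Fˣ × DivF F).2 ^ n = (divF F (z : Fˣ × DivF F).1)⁻¹ :=
        eq_inv_of_mul_eq_one_left hz
      rw [this, _root_.map_inv, show ClassGroup.mk F (divF F (z : Fˣ × DivF F).1) = 1 from
        mk_toPrincipal F _, inv_one]
  have hsurj : ∀ c : ClassGroup (𝓞 F), c ^ n = 1 → ∃ w, f w = c := by
    intro c hc
    obtain ⟨I, hI⟩ := mk_surj' F c
    have h1 : ClassGroup.mk F (I ^ n) = 1 := by rw [map_pow, hI, hc]
    obtain ⟨x, hx⟩ := mk_eq_one' F h1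
    have hz : ((x⁻¹, I) : Fˣ × DivF F) ∈ Z1 F n := by
      show z1Hom F n _ = 1
      rw [hz1]
      show I ^ n * divF F x⁻¹ = 1
      rw [_root_.map_inv, show divF F x = I ^ n from hx, mul_inv_cancel]
    exact ⟨QuotientGroup.mk ⟨(x⁻¹, I), hz⟩, hI⟩
  have hkr : f.ker = g.range := by
    ext w
    constructor
    · intro hw
      induction w using QuotientGroup.induction_on with
      | H z =>
        rw [MonoidHom.mem_ker] at hw
        have hw' : ClassGroup.mk F (z : Fˣ × DivF F).2 = 1 := hw
        obtain ⟨y, hy⟩ := mk_eq_one' F hw'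
        have hz : (z : Fˣ × DivF F).2 ^ n * divF F (z : Fˣ × DivF F).1 = 1 := by
          rw [← hz1]; exact z.2
        have hdy : divF F (y ^ n * (z : Fˣ × DivF F).1) = 1 := by
          rw [_root_.map_mul, map_pow, show divF F y = (z : Fˣ × DivF F).2 from hy, hz]
        obtain ⟨u, hu⟩ := toPrincipal_eq_one F _ hdy
        refine ⟨QuotientGroup.mk u, ?_⟩
        show QuotientGroup.mk (gbar u) = QuotientGroup.mk z
        rw [QuotientGroup.eq]
        rw [Subgroup.mem_subgroupOf]
        refine ⟨y⁻¹, ?_⟩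
        rw [hb1]
        apply Prod.ext
        · show (y⁻¹) ^ n = ((gbar u : Fˣ × DivF F).1)⁻¹ * (z : Fˣ × DivF F).1
          show (y⁻¹) ^ n = (UF F u)⁻¹ * (z : Fˣ × DivF F).1
          rw [hu, mul_inv, mul_assoc, inv_mul_cancel, mul_one, inv_pow]
        · show (divF F y⁻¹)⁻¹ = ((gbar u : Fˣ × DivF F).2)⁻¹ * (z : Fˣ × DivF F).2
          show (divF F y⁻¹)⁻¹ = (1 : DivF F)⁻¹ * (z : Fˣ × DivF F).2
          rw [_root_.map_inv (divF F), inv_inv, inv_one, one_mul]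
          exact hy
    · rintro ⟨a, rfl⟩
      induction a using QuotientGroup.induction_on with
      | H u =>
        rw [MonoidHom.mem_ker]
        show ClassGroup.mk F (gbar u : Fˣ × DivF F).2 = 1
        show ClassGroup.mk F (1 : DivF F) = 1
        exact _root_.map_one _
  refine ⟨g, f, hginj, hres, htor, hsurj, hkr, ?_⟩
  have hketa : f.ker = g.range := hkr
  have h1 := Subgroup.card_eq_card_quotient_mul_card_subgroup f.ker
  have e1 : Nat.card ((Z1 F n ⧸ (B1 F n).subgroupOf (Z1 F n)) ⧸ f.ker)
      = Nat.card f.range :=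
    Nat.card_congr (QuotientGroup.quotientKerEquivRange f).toEquiv
  have e2 : Nat.card f.range = Nat.card {c : ClassGroup (𝓞 F) // c ^ n = 1} := by
    apply Nat.card_congr
    apply Equiv.subtypeEquivRight
    intro c
    constructor
    · rintro ⟨w, rfl⟩; exact htor w
    · intro h; exact hsurj c h
  have e3 : Nat.card f.ker = Nat.card ((𝓞 F)ˣ ⧸ (powMonoidHom n : (𝓞 F)ˣ →* (𝓞 F)ˣ).range) := by
    rw [hketa]
    exact Nat.card_congr ((Equiv.setCongr g.coe_range).trans (Equiv.ofInjective g hginj).symm)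
  rw [h1, e1, e2, e3, mul_comm]
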